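/- Let f(x) = 1-√x. For 0 ≤ x₂ < x₁ ≤ 1 and i < j natural numbers, the quantity P(x₁ ≥ U_i, x₂ ≥ U_j) := 1 - f(x₁)^{i+1} - f(x₂)^{j+1}(1 - (f(x₁)/f(x₂))^{i+1}) lies in [0,1], and is monotone non-decreasing in both x₁ and x₂. -/

import Mathlib

/-- The two-speed joint CDF formula of Theorem 2.8, with `f x = 1 - √x`. -/
noncomputable def jointCDF (i j : ℕ) (x₁ x₂ : ℝ) : ℝ :=
  1 - (1 - Real.sqrt x₁) ^ (i + 1) -
    (1 - Real.sqrt x₂) ^ (j + 1) *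
      (1 - ((1 - Real.sqrt x₁) / (1 - Real.sqrt x₂)) ^ (i + 1))

lemma expand_aux (n k : ℕ) (a b : ℝ) (hb : b ≠ 0) :
    1 - a ^ n - (b ^ (n + k)) * (1 - (a / b) ^ n)
      = 1 - (a ^ n * (1 - b ^ k) + b ^ n * b ^ k) := by
  field_simp [pow_add]
  have hbb : b ^ n * b⁻¹ ^ n = 1 := by rw [← mul_pow, mul_inv_cancel₀ hb, one_pow]
  linear_combination (a ^ n * b ^ k) * hbb

lemma g_mono (m k : ℕ) (a b a' b' : ℝ) (ha' : 0 ≤ a') (haa : a' ≤ a)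
    (hab' : a' ≤ b') (hbb : b' ≤ b) (hb1 : b ≤ 1) :
    a' ^ m * (1 - b' ^ k) + b' ^ m * b' ^ k ≤ a ^ m * (1 - b ^ k) + b ^ m * b ^ k := by
  have hb'0 : 0 ≤ b' := ha'.trans hab'
  have hA : a' ^ m ≤ a ^ m := pow_le_pow_left₀ ha' haa m
  have hE : a' ^ m ≤ b' ^ m := pow_le_pow_left₀ ha' hab' m
  have hF : b' ^ m ≤ b ^ m := pow_le_pow_left₀ hb'0 hbb m
  have hC : b' ^ k ≤ b ^ k := pow_le_pow_left₀ hb'0 hbb k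
  have hD1 : b ^ k ≤ 1 := pow_le_one₀ (hb'0.trans hbb) hb1
  have hC0 : 0 ≤ b' ^ k := pow_nonneg hb'0 k
  have hD0 : 0 ≤ b ^ k := pow_nonneg (hb'0.trans hbb) k
  nlinarith [mul_nonneg (sub_nonneg.2 hC) (sub_nonneg.2 hE),
    mul_nonneg (sub_nonneg.2 hD1) (sub_nonneg.2 hA),
    mul_nonneg hD0 (sub_nonneg.2 hF)]

lemma jointCDF_eq (i j : ℕ) (hij : i < j) (x₁ x₂ : ℝ)
    (hb : (1 : ℝ) - Real.sqrt x₂ ≠ 0) :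
    jointCDF i j x₁ x₂ = 1 - ((1 - Real.sqrt x₁) ^ (i + 1) * (1 - (1 - Real.sqrt x₂) ^ (j - i))
      + (1 - Real.sqrt x₂) ^ (i + 1) * (1 - Real.sqrt x₂) ^ (j - i)) := by
  have h : j + 1 = (i + 1) + (j - i) := by omega
  rw [jointCDF, h, expand_aux _ _ _ _ hb]

theorem stmt_15 (i j : ℕ) (hij : i < j) (x₁ x₂ x₁' x₂' : ℝ)
    (h1 : 0 ≤ x₂) (h2 : x₂ < x₁) (h3 : x₁ ≤ 1)
    (h1' : 0 ≤ x₂') (h2' : x₂' < x₁') (h3' : x₁' ≤ 1)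
    (hm1 : x₁ ≤ x₁') (hm2 : x₂ ≤ x₂') :
    0 ≤ jointCDF i j x₁ x₂ ∧ jointCDF i j x₁ x₂ ≤ 1 ∧
      jointCDF i j x₁ x₂ ≤ jointCDF i j x₁' x₂' := by
  set a := 1 - Real.sqrt x₁ with ha_def
  set b := 1 - Real.sqrt x₂ with hb_def
  set a' := 1 - Real.sqrt x₁' with ha'_def
  set b' := 1 - Real.sqrt x₂' with hb'_def
  have hs1 : Real.sqrt x₁ ≤ 1 := by
    rw [show (1:ℝ) = Real.sqrt 1 by simp]
    exact Real.sqrt_le_sqrt h3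
  have hs1' : Real.sqrt x₁' ≤ 1 := by
    rw [show (1:ℝ) = Real.sqrt 1 by simp]
    exact Real.sqrt_le_sqrt h3'
  have hab : a < b := by
    have := Real.sqrt_lt_sqrt h1 h2
    simp [ha_def, hb_def]; linarith
  have hab' : a' < b' := by
    have := Real.sqrt_lt_sqrt h1' h2'
    simp [ha'_def, hb'_def]; linarith
  have ha0 : 0 ≤ a := by simp [ha_def]; linarith
  have ha'0 : 0 ≤ a' := by simp [ha'_def]; linarith
  have hb1 : b ≤ 1 := by simp [hb_def]
  have hb'1 : b' ≤ 1 := by simp [hb'_def]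
  have haa : a' ≤ a := by
    have := Real.sqrt_le_sqrt hm1
    rw [ha_def, ha'_def]; linarith
  have hbb : b' ≤ b := by
    have := Real.sqrt_le_sqrt hm2
    rw [hb_def, hb'_def]; linarith
  have hbne : b ≠ 0 := ne_of_gt (lt_of_le_of_lt ha0 hab)
  have hb'ne : b' ≠ 0 := ne_of_gt (lt_of_le_of_lt ha'0 hab')
  rw [jointCDF_eq i j hij x₁ x₂ hbne, jointCDF_eq i j hij x₁' x₂' hb'ne]
  have hk1 : b ^ (j - i) ≤ 1 := pow_le_one₀ (ha0.trans hab.le) hb1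
  have hmono := g_mono (i+1) (j-i) a b a' b' ha'0 haa hab'.le hbb hb1
  have hupper := g_mono (i+1) (j-i) b b a b ha0 hab.le hab.le le_rfl hb1
  have hGnn : 0 ≤ a ^ (i+1) * (1 - b ^ (j-i)) + b ^ (i+1) * b ^ (j-i) := by
    have h1 : 0 ≤ a ^ (i+1) * (1 - b ^ (j-i)) :=
      mul_nonneg (pow_nonneg ha0 _) (by linarith)
    have h2 : 0 ≤ b ^ (i+1) * b ^ (j-i) :=
      mul_nonneg (pow_nonneg (ha0.trans hab.le) _) (pow_nonneg (ha0.trans hab.le) _)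
    linarith
  have hbm1 : b ^ (i+1) ≤ 1 := pow_le_one₀ (ha0.trans hab.le) hb1
  refine ⟨by nlinarith, by linarith, by linarith⟩
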